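/- Assume here that q is real with 0 < q < 1, and let r ∈ ℕ and β ∈ ℂ. For all real x with 0 < x < 1 and all y ∈ ℂ, the r-fold q-derivative in x of the function g(x) = x^{β+r−1} · Φ₁(a, q^β; c; q; x, y) (complex powers of the positive reals x, qx, …, q^r x taken via the principal branch) satisfies (D_{x,q}^r g)(x) = ((q^β;q)_r / (1−q)^r) · x^{β−1} · Φ₁(a, q^{β+r}; c; q; x, y). -/

import Mathlib

open scoped BigOperators

noncomputable section

/-- The q-shifted factorial `(a;q)_n = ∏_{r=0}^{n-1} (1 - a q^r)`. -/
def qPoch (q a : ℂ) (n : ℕ) : ℂ := ∏ r ∈ Finset.range n, (1 - a * q ^ r)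

/-- The basic Humbert function `Φ₁(a,b;c;q;x,y)` as a double series over `ℕ × ℕ`. -/
def Phi1 (q a b c x y : ℂ) : ℂ :=
  ∑' p : ℕ × ℕ,
    qPoch q a (p.1 + p.2) * qPoch q b p.1 * x ^ p.1 * y ^ p.2 /
      (qPoch q c (p.1 + p.2) * qPoch q q p.1 * qPoch q q p.2)

/-- The basic Humbert function `Φ₂(a,b;c;q;x,y)` as a double series over `ℕ × ℕ`. -/
def Phi2 (q a b c x y : ℂ) : ℂ :=
  ∑' p : ℕ × ℕ,
    qPoch q a p.1 * qPoch q b p.2 * x ^ p.1 * y ^ p.2 /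
      (qPoch q c (p.1 + p.2) * qPoch q q p.1 * qPoch q q p.2)

/-- The basic Humbert function `Φ₃(a;b;q;x,y)` as a double series over `ℕ × ℕ`. -/
def Phi3 (q a b x y : ℂ) : ℂ :=
  ∑' p : ℕ × ℕ,
    qPoch q a p.1 * x ^ p.1 * y ^ p.2 /
      (qPoch q b (p.1 + p.2) * qPoch q q p.1 * qPoch q q p.2)

/-- The one-variable q-difference operator. -/
def qDiff (q : ℂ) (f : ℂ → ℂ) : ℂ → ℂ := fun x => (f x - f (q * x)) / ((1 - q) * x)

/-- The q-difference operator in the first variable of a two-variable function. -/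
def qDx (q : ℂ) (f : ℂ → ℂ → ℂ) : ℂ → ℂ → ℂ :=
  fun x y => (f x y - f (q * x) y) / ((1 - q) * x)

/-- The q-difference operator in the second variable of a two-variable function. -/
def qDy (q : ℂ) (f : ℂ → ℂ → ℂ) : ℂ → ℂ → ℂ :=
  fun x y => (f x y - f x (q * y)) / ((1 - q) * y)

/-- The infinite q-shifted factorial `(a;q)_∞ = ∏_{r=0}^∞ (1 - a q^r)`. -/
def qPochInf (q a : ℂ) : ℂ := ∏' r : ℕ, (1 - a * q ^ r)

lemma qPoch_zero' (Q t : ℂ) : qPoch Q t 0 = 1 := by simp [qPoch]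

lemma qPoch_succ' (Q t : ℂ) (n : ℕ) :
    qPoch Q t (n + 1) = (1 - t) * qPoch Q (t * Q) n := by
  unfold qPoch
  rw [Finset.prod_range_succ']
  simp only [pow_zero, mul_one]
  rw [mul_comm]
  congr 1
  refine Finset.prod_congr rfl fun i _ => ?_
  rw [pow_succ']
  ring

lemma qPoch_add' (Q t : ℂ) (n m : ℕ) :
    qPoch Q t (n + m) = qPoch Q t n * qPoch Q (t * Q ^ n) m := by
  unfold qPoch
  rw [Finset.prod_range_add]
  congr 1
  refine Finset.prod_congr rfl fun i _ => ?_
  rw [pow_add]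
  ring

lemma prod_one_sub_ge (s : Finset ℕ) (g : ℕ → ℝ) (h0 : ∀ i ∈ s, 0 ≤ g i)
    (h1 : ∀ i ∈ s, g i ≤ 1) :
    1 - ∑ i ∈ s, g i ≤ ∏ i ∈ s, (1 - g i) := by
  classical
  induction s using Finset.cons_induction with
  | empty => simp
  | cons j s hj ih =>
    rw [Finset.prod_cons, Finset.sum_cons]
    have h0j := h0 j (Finset.mem_cons_self j s)
    have h1j := h1 j (Finset.mem_cons_self j s)
    have ih' := ih (fun i hi => h0 i (Finset.mem_cons_of_mem hi))
      (fun i hi => h1 i (Finset.mem_cons_of_mem hi))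
    have hsum : 0 ≤ ∑ i ∈ s, g i :=
      Finset.sum_nonneg fun i hi => h0 i (Finset.mem_cons_of_mem hi)
    nlinarith [mul_le_mul_of_nonneg_left ih' (by linarith : (0:ℝ) ≤ 1 - g j)]

lemma qPoch_norm_le {q : ℝ} (hq0 : 0 < q) (hq1 : q < 1) (t : ℂ) (m : ℕ) :
    ‖qPoch (q : ℂ) t m‖ ≤ Real.exp (‖t‖ / (1 - q)) := by
  have hqc : ‖(q:ℂ)‖ = q := by rw [Complex.norm_real]; exact abs_of_pos hq0
  calc ‖qPoch (q : ℂ) t m‖ = ∏ r ∈ Finset.range m, ‖1 - t * (q:ℂ) ^ r‖ := by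
        rw [qPoch]; exact norm_prod _ _
    _ ≤ ∏ r ∈ Finset.range m, Real.exp (‖t‖ * q ^ r) := by
        refine Finset.prod_le_prod (fun i _ => norm_nonneg _) fun i _ => ?_
        have h1 : ‖1 - t * (q:ℂ) ^ i‖ ≤ 1 + ‖t‖ * q ^ i := by
          calc ‖1 - t * (q:ℂ) ^ i‖ ≤ ‖(1:ℂ)‖ + ‖t * (q:ℂ) ^ i‖ := norm_sub_le _ _
            _ = 1 + ‖t‖ * q ^ i := by rw [norm_one, norm_mul, norm_pow, hqc]
        refine h1.trans ?_
        have := Real.add_one_le_exp (‖t‖ * q ^ i)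
        linarith
    _ = Real.exp (∑ r ∈ Finset.range m, ‖t‖ * q ^ r) := (Real.exp_sum _ _).symm
    _ ≤ Real.exp (‖t‖ / (1 - q)) := by
        apply Real.exp_le_exp.2
        rw [← Finset.mul_sum, div_eq_mul_inv]
        refine mul_le_mul_of_nonneg_left ?_ (norm_nonneg t)
        have hs : ∑ r ∈ Finset.range m, q ^ r ≤ ∑' r : ℕ, q ^ r :=
          Summable.sum_le_tsum _ (fun i _ => by positivity)
            (summable_geometric_of_lt_one hq0.le hq1)
        rwa [tsum_geometric_of_lt_one hq0.le hq1] at hs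

lemma qPoch_lower {q : ℝ} (hq0 : 0 < q) (hq1 : q < 1) (t : ℂ)
    (ht : ∀ m : ℕ, t * (q : ℂ) ^ m ≠ 1) :
    ∃ δ : ℝ, 0 < δ ∧ ∀ k n : ℕ, δ ≤ ‖qPoch (q : ℂ) (t * (q : ℂ) ^ k) n‖ := by
  have hqc : ‖(q:ℂ)‖ = q := by rw [Complex.norm_real]; exact abs_of_pos hq0
  set f : ℕ → ℝ := fun i => ‖1 - t * (q:ℂ) ^ i‖ with hf
  have hfpos : ∀ i, 0 < f i := fun i =>
    norm_pos_iff.2 (sub_ne_zero.2 fun h => ht i h.symm)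
  have hnorm : ∀ k n : ℕ, ‖qPoch (q:ℂ) (t * (q:ℂ) ^ k) n‖
      = ∏ j ∈ Finset.range n, f (k + j) := by
    intro k n
    rw [qPoch, norm_prod]
    refine Finset.prod_congr rfl fun j _ => ?_
    rw [hf]
    congr 2
    rw [pow_add]; ring
  obtain ⟨N, hN⟩ : ∃ N : ℕ, ‖t‖ * q ^ N ≤ (1 - q) / 2 := by
    rcases eq_or_ne t 0 with h | h
    · exact ⟨0, by simp [h]; linarith⟩
    · have htn : 0 < ‖t‖ := norm_pos_iff.2 h
      obtain ⟨N, hN⟩ := exists_pow_lt_of_lt_one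
        (show (0:ℝ) < (1 - q) / 2 / ‖t‖ by
          have h1q : (0:ℝ) < 1 - q := by linarith
          positivity) hq1
      exact ⟨N, by rw [mul_comm]; exact le_of_lt ((lt_div_iff₀ htn).1 hN)⟩
  set μ : ℝ := min 1 ((Finset.range (N + 1)).inf' ⟨0, by simp⟩ f) with hμ
  have hμpos : 0 < μ :=
    lt_min one_pos ((Finset.lt_inf'_iff _).2 fun i _ => hfpos i)
  have hμ1 : μ ≤ 1 := min_le_left _ _
  have hμle : ∀ i, i ≤ N → μ ≤ f i := fun i hi =>
    (min_le_right _ _).trans (Finset.inf'_le f (Finset.mem_range.2 (by omega)))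
  have htail : ∀ k, N ≤ k → ∀ n, (1:ℝ)/2 ≤ ∏ j ∈ Finset.range n, f (k + j) := by
    intro k hk n
    set g : ℕ → ℝ := fun j => ‖t‖ * q ^ (k + j) with hg
    have hg0 : ∀ j, 0 ≤ g j := fun j => by positivity
    have hgN : ∀ j, g j ≤ (1 - q) / 2 := by
      intro j
      refine le_trans ?_ hN
      exact mul_le_mul_of_nonneg_left
        (pow_le_pow_of_le_one hq0.le hq1.le (by omega)) (norm_nonneg t)
    have hg1 : ∀ j, g j ≤ 1 := fun j => (hgN j).trans (by linarith)
    have step1 : ∀ j ∈ Finset.range n, 1 - g j ≤ f (k + j) := by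
      intro j _
      have : ‖(1:ℂ)‖ - ‖t * (q:ℂ) ^ (k + j)‖ ≤ ‖1 - t * (q:ℂ) ^ (k + j)‖ :=
        norm_sub_norm_le _ _
      rw [norm_one, norm_mul, norm_pow, hqc] at this
      exact this
    have step2 : 1 - ∑ j ∈ Finset.range n, g j ≤ ∏ j ∈ Finset.range n, (1 - g j) :=
      prod_one_sub_ge _ _ (fun i _ => hg0 i) (fun i _ => hg1 i)
    have step3 : ∑ j ∈ Finset.range n, g j ≤ 1/2 := by
      have hsum : ∑ j ∈ Finset.range n, g j
          = ‖t‖ * q ^ k * ∑ j ∈ Finset.range n, q ^ j := by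
        rw [Finset.mul_sum]
        exact Finset.sum_congr rfl fun j _ => by
          show ‖t‖ * q ^ (k + j) = ‖t‖ * q ^ k * q ^ j
          rw [pow_add]; ring
      have hgeo : ∑ j ∈ Finset.range n, q ^ j ≤ (1 - q)⁻¹ := by
        have hs := Summable.sum_le_tsum (Finset.range n)
          (fun i _ => by positivity : ∀ i ∉ Finset.range n, (0:ℝ) ≤ q ^ i)
          (summable_geometric_of_lt_one hq0.le hq1)
        rwa [tsum_geometric_of_lt_one hq0.le hq1] at hs
      have hk' : ‖t‖ * q ^ k ≤ (1 - q) / 2 := by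
        refine le_trans ?_ hN
        exact mul_le_mul_of_nonneg_left
          (pow_le_pow_of_le_one hq0.le hq1.le hk) (norm_nonneg t)
      calc ∑ j ∈ Finset.range n, g j = ‖t‖ * q ^ k * ∑ j ∈ Finset.range n, q ^ j := hsum
        _ ≤ ((1 - q)/2) * (1 - q)⁻¹ := by
            refine mul_le_mul hk' hgeo (Finset.sum_nonneg fun i _ => by positivity)
              (by linarith)
        _ = 1/2 := by
            rw [div_mul_eq_mul_div, mul_inv_cancel₀ (by linarith : (1:ℝ) - q ≠ 0)]
    calc (1:ℝ)/2 ≤ 1 - ∑ j ∈ Finset.range n, g j := by linarith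
      _ ≤ ∏ j ∈ Finset.range n, (1 - g j) := step2
      _ ≤ ∏ j ∈ Finset.range n, f (k + j) :=
          Finset.prod_le_prod (fun i _ => by linarith [hg1 i]) step1
  refine ⟨μ ^ N * (1/2), by positivity, fun k n => ?_⟩
  rw [hnorm]
  have hμN1 : μ ^ N ≤ 1 := pow_le_one₀ hμpos.le hμ1
  by_cases hkN : N ≤ k
  · have := htail k hkN n
    nlinarith [pow_nonneg hμpos.le N]
  · push_neg at hkN
    by_cases hn : k + n ≤ N
    · have hlow : μ ^ n ≤ ∏ j ∈ Finset.range n, f (k + j) := by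
        calc μ ^ n = ∏ _j ∈ Finset.range n, μ := by
              rw [Finset.prod_const, Finset.card_range]
          _ ≤ ∏ j ∈ Finset.range n, f (k + j) :=
              Finset.prod_le_prod (fun i _ => hμpos.le)
                (fun i hi => hμle _ (by simp at hi; omega))
      have : μ ^ N ≤ μ ^ n := pow_le_pow_of_le_one hμpos.le hμ1 (by omega)
      nlinarith [pow_nonneg hμpos.le N]
    · push_neg at hn
      obtain ⟨n', rfl⟩ : ∃ n', n = (N - k) + n' := ⟨n - (N - k), by omega⟩
      rw [Finset.prod_range_add]
      have h1 : μ ^ N ≤ ∏ j ∈ Finset.range (N - k), f (k + j) := by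
        have h' : μ ^ (N - k) ≤ ∏ j ∈ Finset.range (N - k), f (k + j) := by
          calc μ ^ (N - k) = ∏ _j ∈ Finset.range (N - k), μ := by
                rw [Finset.prod_const, Finset.card_range]
            _ ≤ _ := Finset.prod_le_prod (fun i _ => hμpos.le)
                (fun i hi => hμle _ (by simp at hi; omega))
        exact le_trans (pow_le_pow_of_le_one hμpos.le hμ1 (by omega)) h'
      have h2 : (1:ℝ)/2 ≤ ∏ j ∈ Finset.range n', f (k + (N - k + j)) := by
        have h'' := htail N le_rfl n'
        refine le_trans h'' (le_of_eq ?_)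
        exact Finset.prod_congr rfl fun i _ => by
          rw [show N + i = k + (N - k + i) by omega]
      have hp1 : (0:ℝ) ≤ ∏ j ∈ Finset.range (N - k), f (k + j) :=
        Finset.prod_nonneg fun i _ => (hfpos _).le
      exact mul_le_mul h1 h2 (by norm_num) hp1

lemma qDiff_iterate_zero (Q : ℂ) (r : ℕ) :
    (qDiff Q)^[r] (fun _ => (0:ℂ)) = fun _ => 0 := by
  induction r with
  | zero => rfl
  | succ n ih =>
    rw [Function.iterate_succ_apply,
      show qDiff Q (fun _ => (0:ℂ)) = fun _ => 0 from funext fun x => by simp [qDiff], ih]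

lemma Phi1_eq_zero_of_not_rowSummable (Q a c y b z : ℂ)
    (h : ¬ Summable (fun k : ℕ => qPoch Q a k * y ^ k / (qPoch Q c k * qPoch Q Q k))) :
    Phi1 Q a b c z y = 0 := by
  apply tsum_eq_zero_of_not_summable
  intro hs
  apply h
  have h2 := hs.comp_injective
    (i := fun k : ℕ => ((0, k) : ℕ × ℕ)) (fun k1 k2 h12 => (Prod.ext_iff.1 h12).2)
  refine h2.congr fun k => ?_
  show qPoch Q a (0 + k) * qPoch Q b 0 * z ^ 0 * y ^ k /
      (qPoch Q c (0 + k) * qPoch Q Q 0 * qPoch Q Q k) = _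
  simp [qPoch_zero']

lemma summable_of_bound {u : ℕ → ℝ} (hu : Summable u) (hu0 : ∀ k, 0 ≤ u k)
    {x : ℝ} (hx0 : 0 ≤ x) (hx1 : x < 1) {F : ℕ × ℕ → ℂ} {C : ℝ} (hC : 0 ≤ C)
    (hF : ∀ p : ℕ × ℕ, ‖F p‖ ≤ C * x ^ p.1 * u p.2) : Summable F := by
  refine Summable.of_norm_bounded (g := fun p : ℕ × ℕ => C * x ^ p.1 * u p.2) ?_
    (fun p => hF p)
  exact Summable.mul_of_nonneg ((summable_geometric_of_lt_one hx0 hx1).mul_left C)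
    hu (fun n => by positivity) hu0

lemma term_norm_bound {q : ℝ} (hq0 : 0 < q) (hq1 : q < 1) (a c : ℂ) {δc δq : ℝ}
    (hδc : 0 < δc) (hδq : 0 < δq)
    (hc2 : ∀ k n : ℕ, δc ≤ ‖qPoch (q:ℂ) (c * (q:ℂ) ^ k) n‖)
    (hq2 : ∀ k n : ℕ, δq ≤ ‖qPoch (q:ℂ) ((q:ℂ) * (q:ℂ) ^ k) n‖)
    (b : ℂ) (w : ℕ → ℂ) (W : ℝ) (hw : ∀ n, ‖w n‖ ≤ W)
    (x : ℝ) (hx0 : 0 ≤ x) (y : ℂ) (p : ℕ × ℕ) :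
    ‖qPoch (q:ℂ) a (p.1 + p.2) * qPoch (q:ℂ) b p.1 * w p.1 * (x:ℂ) ^ p.1 * y ^ p.2 /
        (qPoch (q:ℂ) c (p.1 + p.2) * qPoch (q:ℂ) (q:ℂ) p.1 * qPoch (q:ℂ) (q:ℂ) p.2)‖
      ≤ (Real.exp (‖a‖/(1-q)) * Real.exp (‖b‖/(1-q)) * W / (δc * δq)) * x ^ p.1 *
        ‖qPoch (q:ℂ) a p.2 * y ^ p.2 / (qPoch (q:ℂ) c p.2 * qPoch (q:ℂ) (q:ℂ) p.2)‖ := by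
  obtain ⟨n, k⟩ := p
  simp only
  have hq1' : (0:ℝ) < 1 - q := by linarith
  have hqc : ‖(q:ℂ)‖ = q := by rw [Complex.norm_real]; exact abs_of_pos hq0
  have hxc : ‖(x:ℂ)‖ = x := by rw [Complex.norm_real]; exact abs_of_nonneg hx0
  have hW0 : 0 ≤ W := (norm_nonneg (w 0)).trans (hw 0)
  have hsplita : qPoch (q:ℂ) a (n + k)
      = qPoch (q:ℂ) a k * qPoch (q:ℂ) (a * (q:ℂ) ^ k) n := by
    rw [add_comm, qPoch_add']
  have hsplitc : qPoch (q:ℂ) c (n + k)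
      = qPoch (q:ℂ) c k * qPoch (q:ℂ) (c * (q:ℂ) ^ k) n := by
    rw [add_comm, qPoch_add']
  have hCk0 : δc ≤ ‖qPoch (q:ℂ) c k‖ := by simpa using hc2 0 k
  have hQk0 : δq ≤ ‖qPoch (q:ℂ) (q:ℂ) k‖ := by simpa using hq2 0 k
  have hCn0 : δc ≤ ‖qPoch (q:ℂ) (c * (q:ℂ) ^ k) n‖ := hc2 k n
  have hQn0 : δq ≤ ‖qPoch (q:ℂ) (q:ℂ) n‖ := by simpa using hq2 0 n
  have hAnle : ‖qPoch (q:ℂ) (a * (q:ℂ) ^ k) n‖ ≤ Real.exp (‖a‖/(1-q)) := by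
    refine le_trans (qPoch_norm_le hq0 hq1 _ n) (Real.exp_le_exp.2 ?_)
    have hle : ‖a * (q:ℂ) ^ k‖ ≤ ‖a‖ := by
      calc ‖a * (q:ℂ) ^ k‖ = ‖a‖ * q ^ k := by rw [norm_mul, norm_pow, hqc]
        _ ≤ ‖a‖ * 1 :=
            mul_le_mul_of_nonneg_left (pow_le_one₀ hq0.le hq1.le) (norm_nonneg a)
        _ = ‖a‖ := mul_one _
    gcongr
  have hBnle : ‖qPoch (q:ℂ) b n‖ ≤ Real.exp (‖b‖/(1-q)) := qPoch_norm_le hq0 hq1 b n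
  rw [hsplita, hsplitc, norm_div, norm_mul, norm_mul, norm_mul, norm_mul, norm_mul,
    norm_mul, norm_mul, norm_div, norm_mul, norm_mul, norm_mul, norm_pow, hxc]
  set Ak := ‖qPoch (q:ℂ) a k‖
  set An := ‖qPoch (q:ℂ) (a * (q:ℂ) ^ k) n‖
  set Bn := ‖qPoch (q:ℂ) b n‖
  set Wn := ‖w n‖
  set Ck := ‖qPoch (q:ℂ) c k‖
  set Cn := ‖qPoch (q:ℂ) (c * (q:ℂ) ^ k) n‖
  set Qn := ‖qPoch (q:ℂ) (q:ℂ) n‖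
  set Qk := ‖qPoch (q:ℂ) (q:ℂ) k‖
  set Yk := ‖y ^ k‖
  set Ea := Real.exp (‖a‖/(1-q))
  set Eb := Real.exp (‖b‖/(1-q))
  have hEa : (0:ℝ) < Ea := Real.exp_pos _
  have hEb : (0:ℝ) < Eb := Real.exp_pos _
  have e1 : Ak * An * Bn * Wn * x ^ n * Yk / (Ck * Cn * Qn * Qk)
      = (Ak * Yk * (An * Bn * Wn * x ^ n)) / (Ck * Qk * (Cn * Qn)) := by ring
  have e2 : Ea * Eb * W / (δc * δq) * x ^ n * (Ak * Yk / (Ck * Qk))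
      = (Ak * Yk * (Ea * Eb * W * x ^ n)) / (Ck * Qk * (δc * δq)) := by ring
  rw [e1, e2]
  refine div_le_div₀ ?_ ?_ ?_ ?_
  · exact mul_nonneg (mul_nonneg (norm_nonneg _) (norm_nonneg _))
      (mul_nonneg (mul_nonneg (mul_nonneg hEa.le hEb.le) hW0) (pow_nonneg hx0 n))
  · refine mul_le_mul_of_nonneg_left ?_
      (mul_nonneg (norm_nonneg _) (norm_nonneg _))
    have h1 : An * Bn ≤ Ea * Eb :=
      mul_le_mul hAnle hBnle (norm_nonneg _) hEa.le
    have h2 : An * Bn * Wn ≤ Ea * Eb * (W : ℝ) :=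
      mul_le_mul h1 (hw n) (norm_nonneg _) (mul_nonneg hEa.le hEb.le)
    exact mul_le_mul_of_nonneg_right h2 (pow_nonneg hx0 n)
  · exact mul_pos (mul_pos (lt_of_lt_of_le hδc hCk0) (lt_of_lt_of_le hδq hQk0))
      (mul_pos hδc hδq)
  · refine mul_le_mul_of_nonneg_left ?_
      (mul_nonneg (norm_nonneg _) (norm_nonneg _))
    exact mul_le_mul hCn0 hQn0 hδq.le (norm_nonneg _)

/-- generic double-series term -/
def hTerm (q a c b x y : ℂ) (w : ℕ → ℂ) : ℕ × ℕ → ℂ := fun p =>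
  qPoch q a (p.1 + p.2) * qPoch q b p.1 * w p.1 * x ^ p.1 * y ^ p.2 /
    (qPoch q c (p.1 + p.2) * qPoch q q p.1 * qPoch q q p.2)

/-- the auxiliary weight appearing after `j` q-differentiations -/
def wAux (q β ρ : ℂ) (j n : ℕ) : ℂ := qPoch q (q ^ (β + ρ - j) * q ^ n) j / (1 - q) ^ j


/-- differentiation formula
`D_{x,q}^r [x^{β+r-1} Φ₁(a, q^β; c; q; x, y)] = ((q^β;q)_r/(1-q)^r) x^{β-1} Φ₁(a, q^{β+r}; c; q; x, y)`
for real `0 < q < 1` and real `0 < x < 1`, complex powers via the principal branch. -/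
theorem phi1_diff_formula (q : ℝ) (hq0 : 0 < q) (hq1 : q < 1) (a c β : ℂ)
    (hc : ∀ m : ℕ, c ≠ (q : ℂ) ^ (-(m : ℤ))) (r : ℕ) (x : ℝ) (hx0 : 0 < x) (hx1 : x < 1)
    (y : ℂ) :
    (qDiff (q : ℂ))^[r]
        (fun z : ℂ => z ^ (β + (r : ℂ) - 1) * Phi1 (q : ℂ) a ((q : ℂ) ^ β) c z y) (x : ℂ) =
      qPoch (q : ℂ) ((q : ℂ) ^ β) r / (1 - (q : ℂ)) ^ r * (x : ℂ) ^ (β - 1) *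
        Phi1 (q : ℂ) a ((q : ℂ) ^ (β + (r : ℂ))) c (x : ℂ) y := by
  have hq1' : (0:ℝ) < 1 - q := by linarith
  have hqc0 : ((q:ℂ)) ≠ 0 := by exact_mod_cast hq0.ne'
  have h1mq : (1 : ℂ) - (q:ℂ) ≠ 0 := by
    have h := Complex.ofReal_ne_zero.2 (show (1 - q : ℝ) ≠ 0 by linarith)
    simpa using h
  have hqcnorm : ‖(q:ℂ)‖ = q := by rw [Complex.norm_real]; exact abs_of_pos hq0
  have hnorm1mq : ‖(1:ℂ) - (q:ℂ)‖ = 1 - q := by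
    rw [show (1:ℂ) - (q:ℂ) = ((1 - q : ℝ) : ℂ) by push_cast; ring, Complex.norm_real]
    exact abs_of_pos hq1'
  by_cases hrow : Summable (fun k : ℕ =>
      qPoch (q:ℂ) a k * y ^ k / (qPoch (q:ℂ) c k * qPoch (q:ℂ) (q:ℂ) k))
  · -- main case
    have hc' : ∀ m : ℕ, c * (q:ℂ) ^ m ≠ 1 := by
      intro m h
      refine hc m ?_
      rw [zpow_neg, zpow_natCast]
      field_simp
      linear_combination h
    have hqq' : ∀ m : ℕ, (q:ℂ) * (q:ℂ) ^ m ≠ 1 := by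
      intro m h
      have h2 := congrArg norm h
      rw [norm_mul, norm_pow, hqcnorm, norm_one] at h2
      have h3 : q * q ^ m < 1 := by
        calc q * q ^ m ≤ q * 1 :=
              mul_le_mul_of_nonneg_left (pow_le_one₀ hq0.le hq1.le) hq0.le
          _ = q := mul_one q
          _ < 1 := hq1
      linarith [h3, h2.ge, h2.le]
    obtain ⟨δc, hδc, hc2⟩ := qPoch_lower hq0 hq1 c hc'
    obtain ⟨δq, hδq, hq2⟩ := qPoch_lower hq0 hq1 (q:ℂ) hqq'
    have hSum : ∀ (w : ℕ → ℂ) (W : ℝ), (∀ n, ‖w n‖ ≤ W) → ∀ (t : ℝ), 0 ≤ t → t < 1 →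
        Summable (fun p : ℕ × ℕ => hTerm (q:ℂ) a c ((q:ℂ) ^ β) (t:ℂ) y w p) := by
      intro w W hw t ht0 ht1
      have hW0 : 0 ≤ W := (norm_nonneg (w 0)).trans (hw 0)
      refine summable_of_bound hrow.norm (fun k => norm_nonneg _) ht0 ht1
        (C := Real.exp (‖a‖/(1-q)) * Real.exp (‖(q:ℂ)^β‖/(1-q)) * W / (δc * δq))
        (div_nonneg (mul_nonneg (mul_nonneg (Real.exp_pos _).le (Real.exp_pos _).le) hW0)
          (mul_pos hδc hδq).le) (fun p => ?_)
      simpa [hTerm] using term_norm_bound hq0 hq1 a c hδc hδq hc2 hq2 ((q:ℂ)^β)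
        w W hw t ht0 y p
    -- bound for the auxiliary weights
    have hwB : ∀ j : ℕ, ∀ n : ℕ, ‖wAux (q:ℂ) β (r:ℂ) j n‖
        ≤ Real.exp (‖(q:ℂ) ^ (β + (r:ℂ) - (j:ℂ))‖/(1-q)) / (1-q)^j := by
      intro j n
      have hpj : (0:ℝ) < (1-q)^j := pow_pos hq1' j
      rw [wAux, norm_div, norm_pow, hnorm1mq]
      refine div_le_div_of_nonneg_right ?_ hpj.le |>.trans le_rfl
      refine (qPoch_norm_le hq0 hq1 _ j).trans (Real.exp_le_exp.2 ?_)
      refine div_le_div_of_nonneg_right ?_ hq1'.le |>.trans le_rfl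
      calc ‖(q:ℂ) ^ (β + (r:ℂ) - (j:ℂ)) * (q:ℂ) ^ n‖
          = ‖(q:ℂ) ^ (β + (r:ℂ) - (j:ℂ))‖ * q ^ n := by rw [norm_mul, norm_pow, hqcnorm]
        _ ≤ ‖(q:ℂ) ^ (β + (r:ℂ) - (j:ℂ))‖ * 1 :=
            mul_le_mul_of_nonneg_left (pow_le_one₀ hq0.le hq1.le) (norm_nonneg _)
        _ = _ := mul_one _
    -- the key induction
    have key : ∀ (j : ℕ) (t : ℝ), 0 < t → t < 1 →
        (qDiff (q:ℂ))^[j]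
            (fun z : ℂ => z ^ (β + (r:ℂ) - 1) * Phi1 (q:ℂ) a ((q:ℂ)^β) c z y) (t:ℂ)
          = (t:ℂ) ^ (β + (r:ℂ) - 1 - (j:ℂ)) *
            ∑' p : ℕ × ℕ, hTerm (q:ℂ) a c ((q:ℂ)^β) (t:ℂ) y (wAux (q:ℂ) β (r:ℂ) j) p := by
      intro j
      induction j with
      | zero =>
        intro t ht0 ht1
        simp only [Function.iterate_zero, id_eq, Nat.cast_zero, sub_zero]
        rw [Phi1]
        congr 1
        refine tsum_congr fun p => ?_
        simp [hTerm, wAux, qPoch_zero']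
      | succ j ih =>
        intro t ht0 ht1
        have ht0' : (0:ℝ) < q * t := by positivity
        have ht1' : q * t < 1 := by nlinarith
        have htc0 : ((t:ℝ):ℂ) ≠ 0 := Complex.ofReal_ne_zero.2 ht0.ne'
        rw [Function.iterate_succ_apply']
        have e1 := ih t ht0 ht1
        have e2 := ih (q * t) ht0' ht1'
        simp only [qDiff]
        rw [show (q:ℂ) * (t:ℂ) = ((q * t : ℝ):ℂ) by push_cast; ring]
        rw [e1, e2]
        set E : ℂ := β + (r:ℂ) - 1 - (j:ℂ) with hE
        set G : ℂ := β + (r:ℂ) - 1 - ((j+1 : ℕ):ℂ) with hG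
        have hqt : ((q * t : ℝ):ℂ) ^ E = (q:ℂ) ^ E * (t:ℂ) ^ E := by
          rw [show ((q * t : ℝ):ℂ) = ((q:ℝ):ℂ) * ((t:ℝ):ℂ) by push_cast; ring]
          exact Complex.mul_cpow_ofReal_nonneg hq0.le ht0.le E
        -- second weight
        have hS2 : (q:ℂ) ^ E *
            (∑' p : ℕ × ℕ, hTerm (q:ℂ) a c ((q:ℂ)^β) ((q * t : ℝ):ℂ) y (wAux (q:ℂ) β (r:ℂ) j) p)
            = ∑' p : ℕ × ℕ, hTerm (q:ℂ) a c ((q:ℂ)^β) (t:ℂ) y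
                (fun n => (q:ℂ) ^ E * wAux (q:ℂ) β (r:ℂ) j n * (q:ℂ) ^ n) p := by
          rw [← tsum_mul_left]
          refine tsum_congr fun p => ?_
          simp only [hTerm]
          push_cast
          ring
        have hsum1 : Summable (fun p : ℕ × ℕ =>
            hTerm (q:ℂ) a c ((q:ℂ)^β) (t:ℂ) y (wAux (q:ℂ) β (r:ℂ) j) p) :=
          hSum _ _ (hwB j) t ht0.le ht1
        have hsum2 : Summable (fun p : ℕ × ℕ => hTerm (q:ℂ) a c ((q:ℂ)^β) (t:ℂ) y
            (fun n => (q:ℂ) ^ E * wAux (q:ℂ) β (r:ℂ) j n * (q:ℂ) ^ n) p) := by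
          refine hSum _ (‖(q:ℂ) ^ E‖ * (Real.exp (‖(q:ℂ) ^ (β + (r:ℂ) - (j:ℂ))‖/(1-q)) / (1-q)^j))
            (fun n => ?_) t ht0.le ht1
          rw [norm_mul, norm_mul]
          calc ‖(q:ℂ) ^ E‖ * ‖wAux (q:ℂ) β (r:ℂ) j n‖ * ‖(q:ℂ) ^ n‖
              ≤ ‖(q:ℂ) ^ E‖ * ‖wAux (q:ℂ) β (r:ℂ) j n‖ * 1 := by
                refine mul_le_mul_of_nonneg_left ?_
                  (mul_nonneg (norm_nonneg _) (norm_nonneg _))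
                rw [norm_pow, hqcnorm]
                exact pow_le_one₀ hq0.le hq1.le
            _ = ‖(q:ℂ) ^ E‖ * ‖wAux (q:ℂ) β (r:ℂ) j n‖ := mul_one _
            _ ≤ _ := mul_le_mul_of_nonneg_left (hwB j n) (norm_nonneg _)
        have hpow : (t:ℂ) ^ E = (t:ℂ) ^ G * (t:ℂ) := by
          rw [show E = G + 1 by rw [hE, hG]; push_cast; ring,
            Complex.cpow_add _ _ htc0, Complex.cpow_one]
        -- identity for the new weight
        have hwid : ∀ n : ℕ, wAux (q:ℂ) β (r:ℂ) j n * (1 - (q:ℂ) ^ E * (q:ℂ) ^ n) / (1 - (q:ℂ))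
            = wAux (q:ℂ) β (r:ℂ) (j+1) n := by
          intro n
          have h5 : (q:ℂ) ^ (β + (r:ℂ) - (j:ℂ)) = (q:ℂ) ^ E * (q:ℂ) := by
            rw [show β + (r:ℂ) - (j:ℂ) = E + 1 by rw [hE]; ring,
              Complex.cpow_add _ _ hqc0, Complex.cpow_one]
          have h6 : qPoch (q:ℂ) ((q:ℂ) ^ (β + (r:ℂ) - ((j+1 : ℕ):ℂ)) * (q:ℂ) ^ n) (j+1)
              = (1 - (q:ℂ) ^ E * (q:ℂ) ^ n) *
                qPoch (q:ℂ) ((q:ℂ) ^ (β + (r:ℂ) - (j:ℂ)) * (q:ℂ) ^ n) j := by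
            rw [qPoch_succ']
            rw [show β + (r:ℂ) - ((j+1 : ℕ):ℂ) = E by rw [hE]; push_cast; ring]
            congr 1
            rw [h5]
            ring
          rw [wAux, wAux, h6, pow_succ]
          rw [show ((j+1:ℕ):ℂ) = (j:ℂ) + 1 by push_cast; ring] at *
          field_simp
        calc ((t:ℂ) ^ E *
              (∑' p : ℕ × ℕ, hTerm (q:ℂ) a c ((q:ℂ)^β) (t:ℂ) y (wAux (q:ℂ) β (r:ℂ) j) p) -
            ((q * t : ℝ):ℂ) ^ E *
              (∑' p : ℕ × ℕ, hTerm (q:ℂ) a c ((q:ℂ)^β) ((q * t : ℝ):ℂ) y (wAux (q:ℂ) β (r:ℂ) j) p)) /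
            ((1 - (q:ℂ)) * (t:ℂ))
            = ((t:ℂ) ^ E *
              ((∑' p : ℕ × ℕ, hTerm (q:ℂ) a c ((q:ℂ)^β) (t:ℂ) y (wAux (q:ℂ) β (r:ℂ) j) p) -
               (∑' p : ℕ × ℕ, hTerm (q:ℂ) a c ((q:ℂ)^β) (t:ℂ) y
                 (fun n => (q:ℂ) ^ E * wAux (q:ℂ) β (r:ℂ) j n * (q:ℂ) ^ n) p))) /
            ((1 - (q:ℂ)) * (t:ℂ)) := by rw [hqt, ← hS2]; ring
          _ = ((t:ℂ) ^ E *
              (∑' p : ℕ × ℕ, (hTerm (q:ℂ) a c ((q:ℂ)^β) (t:ℂ) y (wAux (q:ℂ) β (r:ℂ) j) p -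
                 hTerm (q:ℂ) a c ((q:ℂ)^β) (t:ℂ) y
                   (fun n => (q:ℂ) ^ E * wAux (q:ℂ) β (r:ℂ) j n * (q:ℂ) ^ n) p))) /
            ((1 - (q:ℂ)) * (t:ℂ)) := by rw [Summable.tsum_sub hsum1 hsum2]
          _ = ((t:ℂ) ^ E *
              (∑' p : ℕ × ℕ, hTerm (q:ℂ) a c ((q:ℂ)^β) (t:ℂ) y
                (fun n => wAux (q:ℂ) β (r:ℂ) j n * (1 - (q:ℂ) ^ E * (q:ℂ) ^ n)) p)) /
            ((1 - (q:ℂ)) * (t:ℂ)) := by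
              rw [tsum_congr (f := fun p : ℕ × ℕ =>
                  hTerm (q:ℂ) a c ((q:ℂ)^β) (t:ℂ) y (wAux (q:ℂ) β (r:ℂ) j) p -
                  hTerm (q:ℂ) a c ((q:ℂ)^β) (t:ℂ) y
                    (fun n => (q:ℂ) ^ E * wAux (q:ℂ) β (r:ℂ) j n * (q:ℂ) ^ n) p)
                (g := fun p : ℕ × ℕ => hTerm (q:ℂ) a c ((q:ℂ)^β) (t:ℂ) y
                  (fun n => wAux (q:ℂ) β (r:ℂ) j n * (1 - (q:ℂ) ^ E * (q:ℂ) ^ n)) p)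
                (fun p => by simp only [hTerm]; ring)]
          _ = (t:ℂ) ^ G *
              (∑' p : ℕ × ℕ, hTerm (q:ℂ) a c ((q:ℂ)^β) (t:ℂ) y
                (fun n => wAux (q:ℂ) β (r:ℂ) j n * (1 - (q:ℂ) ^ E * (q:ℂ) ^ n)) p / (1 - (q:ℂ))) := by
              rw [hpow, tsum_div_const]
              field_simp
          _ = (t:ℂ) ^ G *
              ∑' p : ℕ × ℕ, hTerm (q:ℂ) a c ((q:ℂ)^β) (t:ℂ) y (wAux (q:ℂ) β (r:ℂ) (j+1)) p := by
              congr 1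
              refine tsum_congr fun p => ?_
              simp only [hTerm]
              rw [← hwid p.1]
              ring
    -- conclude
    have hkey := key r x hx0 hx1
    rw [hkey]
    have hcpr : (q:ℂ) ^ (β + (r:ℂ)) = (q:ℂ) ^ β * (q:ℂ) ^ r := by
      rw [Complex.cpow_add _ _ hqc0, Complex.cpow_natCast]
    have hconv : (∑' p : ℕ × ℕ, hTerm (q:ℂ) a c ((q:ℂ)^β) (x:ℂ) y (wAux (q:ℂ) β (r:ℂ) r) p)
        = qPoch (q:ℂ) ((q:ℂ)^β) r / (1 - (q:ℂ)) ^ r *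
          ∑' p : ℕ × ℕ,
            qPoch (q:ℂ) a (p.1 + p.2) * qPoch (q:ℂ) ((q:ℂ) ^ (β + (r:ℂ))) p.1 *
              (x:ℂ) ^ p.1 * y ^ p.2 /
            (qPoch (q:ℂ) c (p.1 + p.2) * qPoch (q:ℂ) (q:ℂ) p.1 * qPoch (q:ℂ) (q:ℂ) p.2) := by
      rw [← tsum_mul_left]
      refine tsum_congr fun p => ?_
      simp only [hTerm, wAux]
      rw [show β + (r:ℂ) - ((r:ℕ):ℂ) = β by push_cast; ring]
      have hP : qPoch (q:ℂ) ((q:ℂ)^β) p.1 * qPoch (q:ℂ) ((q:ℂ)^β * (q:ℂ) ^ p.1) r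
          = qPoch (q:ℂ) ((q:ℂ)^β) r * qPoch (q:ℂ) ((q:ℂ) ^ (β + (r:ℂ))) p.1 := by
        rw [hcpr, ← qPoch_add', ← qPoch_add', add_comm]
      linear_combination (qPoch (q:ℂ) a (p.1 + p.2) * (x:ℂ) ^ p.1 * y ^ p.2 /
        ((qPoch (q:ℂ) c (p.1 + p.2) * qPoch (q:ℂ) (q:ℂ) p.1 * qPoch (q:ℂ) (q:ℂ) p.2) *
          (1 - (q:ℂ)) ^ r)) * hP
    rw [hconv, Phi1]
    rw [show β + (r:ℂ) - 1 - ((r:ℕ):ℂ) = β - 1 by push_cast; ring]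
    ring
  · have hzero : ∀ b' z : ℂ, Phi1 (q:ℂ) a b' c z y = 0 := fun b' z =>
      Phi1_eq_zero_of_not_rowSummable _ _ _ _ _ _ hrow
    have hfun : (fun z : ℂ => z ^ (β + (r:ℂ) - 1) * Phi1 (q:ℂ) a ((q:ℂ)^β) c z y)
        = fun _ => (0:ℂ) := funext fun z => by rw [hzero]; ring
    rw [hfun, qDiff_iterate_zero, hzero]
    simp
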